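/- Let q ≥ 2 and m ≥ 2 be integers with m even, and set q₀ := q^{m/2}. Then for every integer s' ≥ q₀(q₀−1) + q, one has m·s'·(q₀ − q^{m/2 − 1} + 1) ≥ q₀³ − 1 (note q₀ − q^{m/2−1} + 1 = q₀ − q₀/q + 1 since q divides q₀). -/
import Mathlib



lemma aux_cube (a : ℕ) (ha2 : 2 ≤ a) : a ^ 3 - 1 ≤ (a * (a - 1) + 2) * (a + 2) := by
  obtain ⟨c, rfl⟩ : ∃ c, a = c + 1 := ⟨a - 1, by omega⟩
  have h : c + 1 - 1 = c := by omega
  rw [h]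
  have h1 : 1 ≤ (c + 1) ^ 3 := Nat.one_le_pow _ _ (by omega)
  zify [h1]
  nlinarith

/-- Hermitian-curve case `e* = m/2`: for integers `q ≥ 2`, `m ≥ 2` even and
`q₀ = q^{m/2}`, every integer `s' ≥ q₀(q₀−1) + q` satisfies
`m·s'·(q₀ − q^{m/2−1} + 1) ≥ q₀³ − 1`. -/
theorem stmt_18 (q m : ℕ) (hq : 2 ≤ q) (hm : 2 ≤ m) (hme : Even m) :
    ∀ s' : ℕ, q ^ (m / 2) * (q ^ (m / 2) - 1) + q ≤ s' →
      (q ^ (m / 2)) ^ 3 - 1 ≤ m * s' * (q ^ (m / 2) - q ^ (m / 2 - 1) + 1) := by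
  intro s' hs'
  obtain ⟨k, rfl⟩ := hme
  obtain ⟨j, rfl⟩ : ∃ j, k = j + 1 := ⟨k - 1, by omega⟩
  have h2 : (j + 1 + (j + 1)) / 2 = j + 1 := by omega
  have h3 : (j + 1 + (j + 1)) / 2 - 1 = j := by omega
  rw [h2] at hs' ⊢
  rw [Nat.add_sub_cancel]
  set b := q ^ j with hb
  have hb1 : 1 ≤ b := Nat.one_le_pow _ _ (by omega)
  have ha : q ^ (j + 1) = b * q := by rw [pow_succ]
  rw [ha] at hs' ⊢
  set a := b * q with haa
  have h2b : 2 * b ≤ a := by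
    calc 2 * b ≤ q * b := by nlinarith
    _ = a := by ring
  have hba : b ≤ a := by omega
  have ha2 : 2 ≤ a := by omega
  -- step 1: a + 2 ≤ 2 * (a - b + 1)
  have hstep1 : a + 2 ≤ 2 * (a - b + 1) := by omega
  have hm2 : 2 ≤ j + 1 + (j + 1) := by omega
  calc a ^ 3 - 1 ≤ (a * (a - 1) + 2) * (a + 2) := aux_cube a ha2
    _ ≤ s' * (a + 2) := by
        have : a * (a - 1) + 2 ≤ s' := by omega
        exact Nat.mul_le_mul_right _ this
    _ ≤ s' * (2 * (a - b + 1)) := Nat.mul_le_mul_left _ hstep1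
    _ ≤ (j + 1 + (j + 1)) * s' * (a - b + 1) := by
        rw [show s' * (2 * (a - b + 1)) = 2 * s' * (a - b + 1) by ring]
        exact Nat.mul_le_mul_right _ (Nat.mul_le_mul_right _ hm2)
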